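/- arXiv:2501.10740 — 7 statements merged into one kernel-verified Lean document; each statement's English description precedes it below -/
import Mathlib

section
/- Let n ≥ 1, 0 < m ≤ 1, let σ : ℝ → ℝ be differentiable with m ≤ σ'(s) ≤ 1 for all s ∈ ℝ, let A be a real n×n matrix and b ∈ ℝⁿ. Set δ⋆ = sup_{D ∈ Ω_m} μ₂(D A). Then for all x, y ∈ ℝⁿ, ⟨σ(Ax + b) − σ(Ay + b), x − y⟩ ≤ δ⋆ ‖x − y‖², i.e. the vector field f(x) = σ(Ax + b) satisfies the one-sided Lipschitz condition with constant δ⋆. -/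
open Matrix
open scoped RealInnerProductSpace

noncomputable section

/-- The symmetric part Sym(M) = (M + Mᵀ)/2 of a square real matrix. -/
def symPart {n : ℕ} (M : Matrix (Fin n) (Fin n) ℝ) : Matrix (Fin n) (Fin n) ℝ :=
  (1/2 : ℝ) • (M + Mᵀ)

theorem symPart_isHermitian {n : ℕ} (M : Matrix (Fin n) (Fin n) ℝ) :
    (symPart M).IsHermitian := by
  unfold symPart Matrix.IsHermitian
  ext i j
  simp [Matrix.conjTranspose_apply, Matrix.transpose_apply, Matrix.add_apply]
  ring

/-- The logarithmic 2-norm μ₂(M): the largest eigenvalue of the symmetric part of M. -/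
def mu2 {n : ℕ} (M : Matrix (Fin n) (Fin n) ℝ) : ℝ :=
  ⨆ i, (symPart_isHermitian M).eigenvalues i

/-- `OmegaSet n m` is the set Ω_m of real n×n diagonal matrices whose diagonal
entries all lie in the interval [m, 1]. -/
def OmegaSet (n : ℕ) (m : ℝ) : Set (Matrix (Fin n) (Fin n) ℝ) :=
  {D | D.IsDiag ∧ ∀ i, m ≤ D i i ∧ D i i ≤ 1}

/-- Identification of `Fin n → ℝ` with the Euclidean space ℝⁿ. -/
def toE {n : ℕ} (v : Fin n → ℝ) : EuclideanSpace ℝ (Fin n) :=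
  (WithLp.equiv 2 _).symm v

/-- Matrix-vector multiplication on Euclidean space. -/
def mulVecE {p q : ℕ} (A : Matrix (Fin p) (Fin q) ℝ) (x : EuclideanSpace ℝ (Fin q)) :
    EuclideanSpace ℝ (Fin p) := toE (A.mulVec (WithLp.equiv 2 _ x))

/-- Entrywise application of a scalar function σ to a vector of Euclidean space. -/
def mapE {n : ℕ} (σ : ℝ → ℝ) (x : EuclideanSpace ℝ (Fin n)) : EuclideanSpace ℝ (Fin n) :=
  toE (fun i => σ (WithLp.equiv 2 _ x i))

/-- Mean value theorem: difference quotient of σ lies in [m, 1]. -/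
lemma mvt_aux (m : ℝ) (σ : ℝ → ℝ) (hσ : Differentiable ℝ σ)
    (hσ' : ∀ s : ℝ, m ≤ deriv σ s ∧ deriv σ s ≤ 1) (p q : ℝ) :
    ∃ d, m ≤ d ∧ d ≤ 1 ∧ σ p - σ q = d * (p - q) := by
  rcases lt_trichotomy p q with h | h | h
  · obtain ⟨c, _, hc⟩ := exists_deriv_eq_slope σ h hσ.continuous.continuousOn
      (fun x _ => (hσ x).differentiableWithinAt)
    refine ⟨deriv σ c, (hσ' c).1, (hσ' c).2, ?_⟩
    rw [hc, div_mul_eq_mul_div, eq_div_iff (sub_ne_zero.mpr h.ne')]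
    ring
  · exact ⟨m, le_refl m, by linarith [(hσ' 0).1, (hσ' 0).2], by rw [h]; ring⟩
  · obtain ⟨c, _, hc⟩ := exists_deriv_eq_slope σ h hσ.continuous.continuousOn
      (fun x _ => (hσ x).differentiableWithinAt)
    refine ⟨deriv σ c, (hσ' c).1, (hσ' c).2, ?_⟩
    rw [hc, div_mul_eq_mul_div, eq_div_iff (sub_ne_zero.mpr h.ne')]

/-- Rayleigh quotient bound: for Hermitian S, uᵀ S u ≤ λmax ‖u‖². -/
lemma rayleigh {n : ℕ} [Nonempty (Fin n)] {S : Matrix (Fin n) (Fin n) ℝ}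
    (hS : S.IsHermitian) (u : Fin n → ℝ) :
    u ⬝ᵥ S *ᵥ u ≤ (⨆ i, hS.eigenvalues i) * (u ⬝ᵥ u) := by
  classical
  set U : Matrix (Fin n) (Fin n) ℝ := (hS.eigenvectorUnitary : Matrix (Fin n) (Fin n) ℝ) with hU
  set w : Fin n → ℝ := Uᵀ *ᵥ u with hwdef
  have hstar : star U = Uᵀ := rfl
  have hUU : U * Uᵀ = 1 := by
    have := mem_unitaryGroup_iff.mp hS.eigenvectorUnitary.2
    rwa [hstar] at this
  have huu : u ⬝ᵥ u = w ⬝ᵥ w := by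
    rw [hwdef, mulVec_transpose, ← dotProduct_mulVec, ← mulVec_transpose, mulVec_mulVec,
      hUU, one_mulVec]
  have hS' : u ⬝ᵥ S *ᵥ u = ∑ i, hS.eigenvalues i * (w i)^2 := by
    conv_lhs => rw [hS.spectral_theorem, Unitary.conjStarAlgAut_apply, ← hU, hstar]
    rw [← mulVec_mulVec, ← mulVec_mulVec, dotProduct_mulVec, ← vecMul_transpose, ← mulVec_transpose]
    rw [← hwdef]
    simp [dotProduct, vecMul_diagonal, Function.comp]
    exact Finset.sum_congr rfl fun i _ => by ring
  have hww : w ⬝ᵥ w = ∑ i, (w i)^2 := by simp [dotProduct, sq]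
  rw [hS', huu, hww, Finset.mul_sum]
  apply Finset.sum_le_sum
  intro i _
  exact mul_le_mul_of_nonneg_right
    (le_ciSup (Set.Finite.bddAbove (Set.finite_range _)) i) (sq_nonneg _)

/-- Each eigenvalue of a Hermitian matrix is at most the sum of absolute values of entries. -/
lemma eigen_le_sum_abs {n : ℕ} {S : Matrix (Fin n) (Fin n) ℝ} (hS : S.IsHermitian) (k : Fin n) :
    hS.eigenvalues k ≤ ∑ i, ∑ j, |S i j| := by
  classical
  set v : Fin n → ℝ := ⇑(hS.eigenvectorBasis k) with hv
  have hnorm : ‖hS.eigenvectorBasis k‖ = 1 := hS.eigenvectorBasis.orthonormal.1 k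
  have hsum1 : ∑ j, v j * v j = 1 := by
    have h1 : ⟪hS.eigenvectorBasis k, hS.eigenvectorBasis k⟫ = ‖hS.eigenvectorBasis k‖ ^ 2 :=
      real_inner_self_eq_norm_sq _
    rw [hnorm] at h1
    rw [PiLp.inner_apply, one_pow] at h1
    exact (Finset.sum_congr rfl fun j _ => by simp only [RCLike.inner_apply, conj_trivial, hv]).trans h1
  have hvle : ∀ i, |v i| ≤ 1 := by
    intro i
    rw [abs_le_one_iff_mul_self_le_one]
    calc v i * v i ≤ ∑ j, v j * v j :=
          Finset.single_le_sum (fun j _ => mul_self_nonneg (v j)) (Finset.mem_univ i)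
      _ = 1 := hsum1
  have heq : hS.eigenvalues k = v ⬝ᵥ S *ᵥ v := by
    simpa using hS.eigenvalues_eq k
  rw [heq]
  calc v ⬝ᵥ S *ᵥ v = ∑ i, ∑ j, v i * (S i j * v j) := by
        simp [dotProduct, mulVec, Finset.mul_sum]
    _ ≤ ∑ i, ∑ j, |S i j| := by
        apply Finset.sum_le_sum; intro i _
        apply Finset.sum_le_sum; intro j _
        calc v i * (S i j * v j) ≤ |v i * (S i j * v j)| := le_abs_self _
          _ = |v i| * |S i j| * |v j| := by rw [abs_mul, abs_mul]; ring
          _ ≤ 1 * |S i j| * 1 := by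
              apply mul_le_mul (mul_le_mul (hvle i) le_rfl (abs_nonneg _) zero_le_one)
                (hvle j) (abs_nonneg _)
              positivity
          _ = |S i j| := by ring

lemma dot_symPart {n : ℕ} (M : Matrix (Fin n) (Fin n) ℝ) (u : Fin n → ℝ) :
    u ⬝ᵥ (symPart M) *ᵥ u = u ⬝ᵥ M *ᵥ u := by
  have ht : u ⬝ᵥ Mᵀ *ᵥ u = u ⬝ᵥ M *ᵥ u := by
    rw [dotProduct_mulVec, vecMul_transpose, dotProduct_comm]
  rw [symPart, smul_mulVec, add_mulVec, dotProduct_smul, dotProduct_add, ht]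
  simp
  ring

lemma DA_entry {n : ℕ} {m : ℝ} {D A : Matrix (Fin n) (Fin n) ℝ} (hD : D ∈ OmegaSet n m)
    (i j : Fin n) : (D * A) i j = D i i * A i j := by
  rw [Matrix.mul_apply]
  rw [Finset.sum_eq_single i]
  · intro k _ hk
    rw [hD.1 (Ne.symm hk), zero_mul]
  · intro h; exact absurd (Finset.mem_univ i) h

lemma mu2_bdd {n : ℕ} [Nonempty (Fin n)] (m : ℝ) (hm0 : 0 < m)
    (A : Matrix (Fin n) (Fin n) ℝ) :
    BddAbove ((fun D => mu2 (D * A)) '' OmegaSet n m) := by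
  classical
  refine ⟨∑ i, ∑ j, |A i j|, ?_⟩
  rintro _ ⟨D, hD, rfl⟩
  have habs : ∀ i j, |symPart (D * A) i j| ≤ (|A i j| + |A j i|) / 2 := by
    intro i j
    have h1 : |D i i| ≤ 1 := by
      rw [abs_le]; constructor
      · linarith [(hD.2 i).1]
      · exact (hD.2 i).2
    have h2 : |D j j| ≤ 1 := by
      rw [abs_le]; constructor
      · linarith [(hD.2 j).1]
      · exact (hD.2 j).2
    have e1 : symPart (D * A) i j = (1/2) * (D i i * A i j + D j j * A j i) := by
      rw [symPart]
      simp only [Matrix.smul_apply, Matrix.add_apply, Matrix.transpose_apply, smul_eq_mul]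
      rw [DA_entry hD, DA_entry hD]
    have hA1 : |D i i * A i j| ≤ |A i j| := by
      rw [abs_mul]
      calc |D i i| * |A i j| ≤ 1 * |A i j| :=
            mul_le_mul_of_nonneg_right h1 (abs_nonneg _)
        _ = |A i j| := one_mul _
    have hA2 : |D j j * A j i| ≤ |A j i| := by
      rw [abs_mul]
      calc |D j j| * |A j i| ≤ 1 * |A j i| :=
            mul_le_mul_of_nonneg_right h2 (abs_nonneg _)
        _ = |A j i| := one_mul _
    rw [e1]
    calc |(1/2) * (D i i * A i j + D j j * A j i)|
        = (1/2) * |D i i * A i j + D j j * A j i| := by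
          rw [abs_mul]; norm_num
      _ ≤ (1/2) * (|D i i * A i j| + |D j j * A j i|) := by
          apply mul_le_mul_of_nonneg_left (abs_add_le _ _) (by norm_num)
      _ ≤ (1/2) * (|A i j| + |A j i|) := by
          apply mul_le_mul_of_nonneg_left (add_le_add hA1 hA2) (by norm_num)
      _ = (|A i j| + |A j i|) / 2 := by ring
  have hC : ∑ i, ∑ j, |symPart (D * A) i j| ≤ ∑ i, ∑ j, |A i j| := by
    calc ∑ i, ∑ j, |symPart (D * A) i j| ≤ ∑ i, ∑ j, (|A i j| + |A j i|) / 2 := by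
          apply Finset.sum_le_sum; intro i _
          apply Finset.sum_le_sum; intro j _
          exact habs i j
      _ = ∑ i, ∑ j, |A i j| := by
          have hswap : (∑ i, ∑ j, |A j i| / 2) = ∑ i, ∑ j, |A i j| / (2:ℝ) :=
            Finset.sum_comm
          calc ∑ i, ∑ j, (|A i j| + |A j i|) / 2
              = (∑ i, ∑ j, |A i j| / 2) + ∑ i, ∑ j, |A j i| / 2 := by
                simp only [add_div, Finset.sum_add_distrib]
            _ = (∑ i, ∑ j, |A i j| / 2) + ∑ i, ∑ j, |A i j| / 2 := by rw [hswap]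
            _ = ∑ i, ∑ j, |A i j| := by
                rw [← Finset.sum_add_distrib]
                refine Finset.sum_congr rfl fun i _ => ?_
                rw [← Finset.sum_add_distrib]
                exact Finset.sum_congr rfl fun j _ => add_halves _
  exact le_trans (ciSup_le fun k => le_trans (eigen_le_sum_abs (symPart_isHermitian _) k) hC)
    le_rfl

/-- The one-layer vector field f(x) = σ(Ax + b) satisfies the one-sided Lipschitz
condition with constant δ⋆ = sup_{D ∈ Ω_m} μ₂(D A). -/
theorem one_sided_lipschitz_one_layer
    {n : ℕ} (hn : 1 ≤ n) (m : ℝ) (hm0 : 0 < m) (hm1 : m ≤ 1)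
    (σ : ℝ → ℝ) (hσ : Differentiable ℝ σ)
    (hσ' : ∀ s : ℝ, m ≤ deriv σ s ∧ deriv σ s ≤ 1)
    (A : Matrix (Fin n) (Fin n) ℝ) (b : EuclideanSpace ℝ (Fin n)) :
    ∀ x y : EuclideanSpace ℝ (Fin n),
      ⟪mapE σ (mulVecE A x + b) - mapE σ (mulVecE A y + b), x - y⟫
        ≤ sSup ((fun D => mu2 (D * A)) '' OmegaSet n m) * ‖x - y‖ ^ 2 := by
  haveI : Nonempty (Fin n) := Fin.pos_iff_nonempty.mp (by omega)
  intro x y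
  classical
  set u : Fin n → ℝ := fun i => x i - y i with hu
  choose d hd1 hd2 hd3 using fun i =>
    mvt_aux m σ hσ hσ' ((A *ᵥ fun j => x j) i + b i) ((A *ᵥ fun j => y j) i + b i)
  set D : Matrix (Fin n) (Fin n) ℝ := diagonal d with hDdef
  have hDmem : D ∈ OmegaSet n m := by
    refine ⟨isDiag_diagonal d, fun i => ?_⟩
    rw [hDdef, diagonal_apply_eq]
    exact ⟨hd1 i, hd2 i⟩
  have hAu : ∀ i, ((A *ᵥ fun j => x j) i + b i) - ((A *ᵥ fun j => y j) i + b i)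
      = (A *ᵥ u) i := by
    intro i
    simp only [mulVec, dotProduct, hu]
    rw [add_sub_add_comm, sub_self, add_zero, ← Finset.sum_sub_distrib]
    exact Finset.sum_congr rfl fun j _ => by ring
  have hinner : ⟪mapE σ (mulVecE A x + b) - mapE σ (mulVecE A y + b), x - y⟫
      = ∑ i, d i * (A *ᵥ u) i * u i := by
    rw [PiLp.inner_apply]
    refine Finset.sum_congr rfl fun i _ => ?_
    simp only [RCLike.inner_apply, conj_trivial, PiLp.sub_apply, PiLp.add_apply,
      mapE, mulVecE, toE, WithLp.equiv_apply, WithLp.equiv_symm_apply, PiLp.toLp_apply]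
    have hx : (WithLp.equiv 2 (Fin n → ℝ)) x = fun j => x j := rfl
    have hy : (WithLp.equiv 2 (Fin n → ℝ)) y = fun j => y j := rfl
    rw [show σ ((A *ᵥ fun j => x j) i + b i) - σ ((A *ᵥ fun j => y j) i + b i)
        = d i * (A *ᵥ u) i from by rw [hd3 i, hAu i]]
    simp only [hu]
    ring
  have hdot : ∑ i, d i * (A *ᵥ u) i * u i = u ⬝ᵥ (D * A) *ᵥ u := by
    rw [hDdef, ← mulVec_mulVec]
    simp only [dotProduct, mulVec_diagonal]
    exact Finset.sum_congr rfl fun i _ => by ring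
  have h1 : u ⬝ᵥ (D * A) *ᵥ u ≤ mu2 (D * A) * (u ⬝ᵥ u) := by
    rw [← dot_symPart]
    unfold mu2
    exact rayleigh (symPart_isHermitian _) u
  have hmu : mu2 (D * A) ≤ sSup ((fun D => mu2 (D * A)) '' OmegaSet n m) :=
    le_csSup (mu2_bdd m hm0 A) ⟨D, hDmem, rfl⟩
  have huu0 : 0 ≤ u ⬝ᵥ u := Finset.sum_nonneg fun i _ => mul_self_nonneg _
  have hnorm : ‖x - y‖ ^ 2 = u ⬝ᵥ u := by
    rw [← real_inner_self_eq_norm_sq, PiLp.inner_apply]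
    simp [dotProduct, hu, sq]
  rw [hinner, hdot, hnorm]
  exact le_trans h1 (mul_le_mul_of_nonneg_right hmu huu0)
end
end

section
/- Let n ≥ 1, 0 < m ≤ 1, let σ : ℝ → ℝ be differentiable with m ≤ σ'(s) ≤ 1 for all s ∈ ℝ, let A be a real n×n matrix, b ∈ ℝⁿ, T > 0, and set δ⋆ = sup_{D ∈ Ω_m} μ₂(D A). If x₁, x₂ : [0,T] → ℝⁿ are differentiable solutions of the neural ODE ẋ(t) = σ(A x(t) + b) on [0,T], then for all t ∈ [0,T], ‖x₁(t) − x₂(t)‖ ≤ e^{δ⋆ t} ‖x₁(0) − x₂(0)‖; in particular ‖x₁(T) − x₂(T)‖ ≤ C ‖x₁(0) − x₂(0)‖ with C = e^{δ⋆ T}. -/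
open Matrix
open scoped RealInnerProductSpace

noncomputable section

lemma star_eq_transpose' {n : ℕ} (U : Matrix (Fin n) (Fin n) ℝ) : star U = Uᵀ := by
  ext i j; simp [Matrix.star_apply]

lemma dot_le_iSup_eigenvalues {n : ℕ} [NeZero n] {M : Matrix (Fin n) (Fin n) ℝ}
    (hM : M.IsHermitian) (v : Fin n → ℝ) :
    v ⬝ᵥ (M *ᵥ v) ≤ (⨆ i, hM.eigenvalues i) * (v ⬝ᵥ v) := by
  set U : Matrix (Fin n) (Fin n) ℝ := (hM.eigenvectorUnitary : Matrix (Fin n) (Fin n) ℝ) with hU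
  have hUU : U * star U = 1 := (Matrix.mem_unitaryGroup_iff).mp hM.eigenvectorUnitary.2
  set w : Fin n → ℝ := star U *ᵥ v with hw
  have hvw : v ⬝ᵥ v = w ⬝ᵥ w := by
    rw [hw, star_eq_transpose', Matrix.dotProduct_mulVec, Matrix.vecMul_transpose,
      Matrix.mulVec_mulVec, ← star_eq_transpose', hUU, Matrix.one_mulVec,
      dotProduct_comm]
  have hkey : v ⬝ᵥ (M *ᵥ v) = ∑ i, hM.eigenvalues i * (w i * w i) := by
    conv_lhs => rw [hM.spectral_theorem, Unitary.conjStarAlgAut_apply]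
    rw [← Matrix.mulVec_mulVec, ← Matrix.mulVec_mulVec, Matrix.dotProduct_mulVec,
      ← Matrix.mulVec_transpose, ← star_eq_transpose', ← hw]
    simp only [dotProduct, Matrix.mulVec_diagonal]
    apply Finset.sum_congr rfl
    intro i _
    simp [Function.comp]
    ring
  rw [hkey, hvw]
  have hb : BddAbove (Set.range hM.eigenvalues) := Set.Finite.bddAbove (Set.finite_range _)
  calc ∑ i, hM.eigenvalues i * (w i * w i)
      ≤ ∑ i, (⨆ j, hM.eigenvalues j) * (w i * w i) := by
        apply Finset.sum_le_sum
        intro i _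
        exact mul_le_mul_of_nonneg_right (le_ciSup hb i) (mul_self_nonneg _)
    _ = (⨆ j, hM.eigenvalues j) * (w ⬝ᵥ w) := by
        rw [← Finset.mul_sum]; rfl

lemma eigenvalues_le_sum_abs {n : ℕ} {M : Matrix (Fin n) (Fin n) ℝ}
    (hM : M.IsHermitian) (i : Fin n) :
    hM.eigenvalues i ≤ ∑ j, ∑ k, |M j k| := by
  set v : Fin n → ℝ := ⇑(hM.eigenvectorBasis i) with hv
  have hnorm : ∑ j, v j * v j = 1 := by
    have h := hM.eigenvectorBasis.orthonormal.1 i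
    have : ⟪hM.eigenvectorBasis i, hM.eigenvectorBasis i⟫ = (1:ℝ) := by
      rw [real_inner_self_eq_norm_sq, h]; norm_num
    simp only [PiLp.inner_apply, RCLike.inner_apply, conj_trivial] at this
    exact this
  have habs : ∀ j, |v j| ≤ 1 := by
    intro j
    have h1 : v j * v j ≤ 1 := by
      calc v j * v j ≤ ∑ k, v k * v k :=
            Finset.single_le_sum (fun k _ => mul_self_nonneg (v k)) (Finset.mem_univ j)
        _ = 1 := hnorm
    nlinarith [abs_nonneg (v j), abs_mul_abs_self (v j)]
  have heig : hM.eigenvalues i = v ⬝ᵥ (M *ᵥ v) := by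
    have hMv : M *ᵥ v = hM.eigenvalues i • v := hM.mulVec_eigenvectorBasis i
    rw [hMv, dotProduct_smul]
    simp only [smul_eq_mul, dotProduct, hnorm, mul_one]
  rw [heig]
  calc v ⬝ᵥ (M *ᵥ v) = ∑ j, ∑ k, v j * (M j k * v k) := by
        simp only [dotProduct, Matrix.mulVec, dotProduct, Finset.mul_sum]
    _ ≤ ∑ j, ∑ k, |M j k| := by
        apply Finset.sum_le_sum; intro j _
        apply Finset.sum_le_sum; intro k _
        calc v j * (M j k * v k) ≤ |v j * (M j k * v k)| := le_abs_self _
          _ = |v j| * |M j k| * |v k| := by rw [abs_mul, abs_mul]; ring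
          _ ≤ 1 * |M j k| * 1 := by
              apply mul_le_mul (mul_le_mul (habs j) le_rfl (abs_nonneg _) (by norm_num))
                (habs k) (abs_nonneg _)
              positivity
          _ = |M j k| := by ring

lemma slope_bounds {m : ℝ} (σ : ℝ → ℝ) (hσ : Differentiable ℝ σ)
    (hσ' : ∀ s : ℝ, m ≤ deriv σ s ∧ deriv σ s ≤ 1)
    {a b : ℝ} (hab : a ≠ b) :
    m ≤ (σ a - σ b) / (a - b) ∧ (σ a - σ b) / (a - b) ≤ 1 := by
  rcases lt_or_gt_of_ne hab with h | h
  · obtain ⟨c, _, hc⟩ := exists_deriv_eq_slope σ h hσ.continuous.continuousOn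
      (fun x _ => (hσ x).differentiableWithinAt)
    have heq : (σ a - σ b) / (a - b) = (σ b - σ a) / (b - a) := by
      rw [← neg_sub (σ b), ← neg_sub b, neg_div_neg_eq]
    rw [heq, ← hc]; exact hσ' c
  · obtain ⟨c, _, hc⟩ := exists_deriv_eq_slope σ h hσ.continuous.continuousOn
      (fun x _ => (hσ x).differentiableWithinAt)
    rw [← hc]; exact hσ' c

lemma mu2_le_sum_abs {n : ℕ} [NeZero n] (M : Matrix (Fin n) (Fin n) ℝ) :
    mu2 M ≤ ∑ j, ∑ k, |symPart M j k| :=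
  ciSup_le fun i => eigenvalues_le_sum_abs (symPart_isHermitian M) i

lemma bddAbove_mu2_image {n : ℕ} [NeZero n] {m : ℝ} (hm0 : 0 < m)
    (A : Matrix (Fin n) (Fin n) ℝ) :
    BddAbove ((fun D => mu2 (D * A)) '' OmegaSet n m) := by
  refine ⟨∑ j, ∑ k, |A j k|, ?_⟩
  rintro x ⟨D, hD, rfl⟩
  refine le_trans (mu2_le_sum_abs _) ?_
  have hDA : ∀ j k, (D * A) j k = D j j * A j k := by
    intro j k
    rw [Matrix.mul_apply]
    rw [Finset.sum_eq_single j]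
    · intro l _ hl; rw [hD.1 (Ne.symm hl), zero_mul]
    · intro h; exact absurd (Finset.mem_univ j) h
  have hDabs : ∀ j, |D j j| ≤ 1 := fun j =>
    abs_le.mpr ⟨le_trans (by linarith [(hD.2 j).1]) (hD.2 j).1, (hD.2 j).2⟩
  have hentry : ∀ j k, |symPart (D * A) j k| ≤ (|A j k| + |A k j|) / 2 := by
    intro j k
    have hs : symPart (D * A) j k = 1 / 2 * (D j j * A j k + D k k * A k j) := by
      simp only [symPart, Matrix.smul_apply, Matrix.add_apply, Matrix.transpose_apply,
        smul_eq_mul, hDA]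
    rw [hs, abs_mul, abs_of_pos (by norm_num : (0:ℝ) < 1/2)]
    have h1 : |D j j * A j k + D k k * A k j| ≤ |A j k| + |A k j| := by
      refine le_trans (abs_add_le _ _) (add_le_add ?_ ?_)
      · rw [abs_mul]; exact mul_le_of_le_one_left (abs_nonneg _) (hDabs j)
      · rw [abs_mul]; exact mul_le_of_le_one_left (abs_nonneg _) (hDabs k)
    linarith
  calc ∑ j, ∑ k, |symPart (D * A) j k| ≤ ∑ j, ∑ k, (|A j k| + |A k j|) / 2 := by
        exact Finset.sum_le_sum fun j _ => Finset.sum_le_sum fun k _ => hentry j k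
    _ = ∑ j, ∑ k, |A j k| := by
        have e1 : ∑ j, ∑ k, (|A j k| + |A k j|) / 2 =
            (∑ j, ∑ k, |A j k|) / 2 + (∑ j, ∑ k, |A k j|) / 2 := by
          simp only [add_div, Finset.sum_add_distrib, Finset.sum_div]
        have e2 : (∑ j, ∑ k, |A (k : Fin n) (j : Fin n)|) = ∑ j, ∑ k, |A j k| :=
          Finset.sum_comm
        rw [e1, e2]; ring

lemma dot_self_nonneg {n : ℕ} (y : Fin n → ℝ) : 0 ≤ y ⬝ᵥ y :=
  Finset.sum_nonneg fun i _ => mul_self_nonneg (y i)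

lemma key_estimate {n : ℕ} [NeZero n] {m : ℝ} (hm0 : 0 < m) (hm1 : m ≤ 1)
    (σ : ℝ → ℝ) (hσ : Differentiable ℝ σ) (hσ' : ∀ s : ℝ, m ≤ deriv σ s ∧ deriv σ s ≤ 1)
    (A : Matrix (Fin n) (Fin n) ℝ) (b : EuclideanSpace ℝ (Fin n))
    (u v : EuclideanSpace ℝ (Fin n)) :
    ⟪u - v, mapE σ (mulVecE A u + b) - mapE σ (mulVecE A v + b)⟫ ≤
      sSup ((fun D => mu2 (D * A)) '' OmegaSet n m) * ⟪u - v, u - v⟫ := by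
  classical
  set y : Fin n → ℝ := fun i => u i - v i with hy
  set p : Fin n → ℝ := fun i => (A *ᵥ (WithLp.equiv 2 _ u)) i + b i with hp
  set q : Fin n → ℝ := fun i => (A *ᵥ (WithLp.equiv 2 _ v)) i + b i with hq
  set d : Fin n → ℝ := fun i => if p i = q i then m else (σ (p i) - σ (q i)) / (p i - q i)
    with hd
  set D : Matrix (Fin n) (Fin n) ℝ := Matrix.diagonal d with hD
  have hDmem : D ∈ OmegaSet n m := by
    refine ⟨Matrix.isDiag_diagonal d, fun i => ?_⟩
    rw [hD, Matrix.diagonal_apply_eq]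
    by_cases h : p i = q i
    · simp only [hd, if_pos h]; exact ⟨le_rfl, hm1⟩
    · simp only [hd, if_neg h]; exact slope_bounds σ hσ hσ' (sub_ne_zero.mp (sub_ne_zero.mpr h))
  have hcomp : ∀ i, σ (p i) - σ (q i) = d i * (p i - q i) := by
    intro i
    by_cases h : p i = q i
    · simp [hd, h]
    · simp only [hd, if_neg h]
      rw [div_mul_cancel₀ _ (sub_ne_zero.mpr h)]
  have hpq : ∀ i, p i - q i = (A *ᵥ y) i := by
    intro i
    simp only [hp, hq, hy]
    have : (A *ᵥ fun i => u i - v i) i =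
        (A *ᵥ (WithLp.equiv 2 _ u)) i - (A *ᵥ (WithLp.equiv 2 _ v)) i := by
      have := congrFun (A.mulVec_sub (WithLp.equiv 2 _ u) (WithLp.equiv 2 _ v)) i
      exact this
    rw [this]; ring
  have hinner1 : ⟪u - v, mapE σ (mulVecE A u + b) - mapE σ (mulVecE A v + b)⟫ =
      ∑ i, y i * (σ (p i) - σ (q i)) := by
    rw [PiLp.inner_apply]
    apply Finset.sum_congr rfl
    intro i _
    simp only [RCLike.inner_apply, conj_trivial, PiLp.sub_apply, mapE, toE, mulVecE,
      WithLp.equiv_symm_apply, WithLp.equiv_apply, PiLp.add_apply, hy, hp, hq]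
    try ring
  have hinner2 : ⟪u - v, u - v⟫ = y ⬝ᵥ y := by
    rw [PiLp.inner_apply]
    apply Finset.sum_congr rfl
    intro i _
    simp [hy, dotProduct, sq]
  rw [hinner1, hinner2]
  have hstep1 : ∑ i, y i * (σ (p i) - σ (q i)) = y ⬝ᵥ ((D * A) *ᵥ y) := by
    rw [← Matrix.mulVec_mulVec]
    apply Finset.sum_congr rfl
    intro i _
    rw [hcomp i, hpq i, hD, Matrix.mulVec_diagonal]
    try ring
  rw [hstep1]
  have hsym : y ⬝ᵥ ((D * A) *ᵥ y) = y ⬝ᵥ (symPart (D * A) *ᵥ y) := by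
    have htr : y ⬝ᵥ ((D * A)ᵀ *ᵥ y) = y ⬝ᵥ ((D * A) *ᵥ y) := by
      rw [Matrix.mulVec_transpose, Matrix.dotProduct_mulVec, dotProduct_comm]
    simp only [symPart, Matrix.smul_mulVec, Matrix.add_mulVec, dotProduct_smul,
      dotProduct_add, htr, smul_eq_mul]
    ring
  rw [hsym]
  calc y ⬝ᵥ (symPart (D * A) *ᵥ y)
      ≤ (⨆ i, (symPart_isHermitian (D * A)).eigenvalues i) * (y ⬝ᵥ y) :=
        dot_le_iSup_eigenvalues (symPart_isHermitian (D * A)) y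
    _ ≤ sSup ((fun D => mu2 (D * A)) '' OmegaSet n m) * (y ⬝ᵥ y) := by
        apply mul_le_mul_of_nonneg_right _ (dot_self_nonneg y)
        exact le_csSup (bddAbove_mu2_image hm0 A) ⟨D, hDmem, rfl⟩

/-- Stability of the one-layer neural ODE ẋ = σ(Ax + b): any two solutions satisfy
‖x₁(t) − x₂(t)‖ ≤ e^{δ⋆ t} ‖x₁(0) − x₂(0)‖ with δ⋆ = sup_{D ∈ Ω_m} μ₂(D A);
in particular ‖x₁(T) − x₂(T)‖ ≤ C ‖x₁(0) − x₂(0)‖ with C = e^{δ⋆ T}. -/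
theorem neural_ode_stability_one_layer
    {n : ℕ} (hn : 1 ≤ n) (m : ℝ) (hm0 : 0 < m) (hm1 : m ≤ 1)
    (σ : ℝ → ℝ) (hσ : Differentiable ℝ σ)
    (hσ' : ∀ s : ℝ, m ≤ deriv σ s ∧ deriv σ s ≤ 1)
    (A : Matrix (Fin n) (Fin n) ℝ) (b : EuclideanSpace ℝ (Fin n))
    (T : ℝ) (hT : 0 < T)
    (x₁ x₂ : ℝ → EuclideanSpace ℝ (Fin n))
    (hx₁ : ∀ t ∈ Set.Icc (0:ℝ) T, HasDerivAt x₁ (mapE σ (mulVecE A (x₁ t) + b)) t)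
    (hx₂ : ∀ t ∈ Set.Icc (0:ℝ) T, HasDerivAt x₂ (mapE σ (mulVecE A (x₂ t) + b)) t) :
    (∀ t ∈ Set.Icc (0:ℝ) T,
      ‖x₁ t - x₂ t‖ ≤
        Real.exp (sSup ((fun D => mu2 (D * A)) '' OmegaSet n m) * t) * ‖x₁ 0 - x₂ 0‖) ∧
    ‖x₁ T - x₂ T‖ ≤
        Real.exp (sSup ((fun D => mu2 (D * A)) '' OmegaSet n m) * T) * ‖x₁ 0 - x₂ 0‖ := by
  haveI : NeZero n := ⟨by omega⟩
  set δ := sSup ((fun D => mu2 (D * A)) '' OmegaSet n m) with hδ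
  set y : ℝ → EuclideanSpace ℝ (Fin n) := fun t => x₁ t - x₂ t with hy
  set y' : ℝ → EuclideanSpace ℝ (Fin n) :=
    fun t => mapE σ (mulVecE A (x₁ t) + b) - mapE σ (mulVecE A (x₂ t) + b) with hy'
  have hyd : ∀ t ∈ Set.Icc (0:ℝ) T, HasDerivAt y (y' t) t :=
    fun t ht => (hx₁ t ht).sub (hx₂ t ht)
  set g : ℝ → ℝ := fun t => ⟪y t, y t⟫ with hg
  set g' : ℝ → ℝ := fun t => 2 * ⟪y t, y' t⟫ with hg'
  have hgd : ∀ t ∈ Set.Icc (0:ℝ) T, HasDerivAt g (g' t) t := by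
    intro t ht
    have h := HasDerivAt.inner ℝ (hyd t ht) (hyd t ht)
    have heq : ⟪y t, y' t⟫ + ⟪y' t, y t⟫ = g' t := by
      rw [hg']; linear_combination real_inner_comm (y t) (y' t)
    rw [heq] at h
    exact h
  have bound : ∀ t ∈ Set.Ico (0:ℝ) T, g' t ≤ 2 * δ * g t + 0 := by
    intro t ht
    have hk := key_estimate hm0 hm1 σ hσ hσ' A b (x₁ t) (x₂ t)
    rw [← hδ] at hk
    simp only [hg', hg, hy, hy', add_zero]
    calc 2 * ⟪x₁ t - x₂ t, mapE σ (mulVecE A (x₁ t) + b) - mapE σ (mulVecE A (x₂ t) + b)⟫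
        ≤ 2 * (δ * ⟪x₁ t - x₂ t, x₁ t - x₂ t⟫) := by linarith
      _ = 2 * δ * ⟪x₁ t - x₂ t, x₁ t - x₂ t⟫ := by ring
  have hgron : ∀ t ∈ Set.Icc (0:ℝ) T, g t ≤ gronwallBound (g 0) (2 * δ) 0 (t - 0) := by
    apply le_gronwallBound_of_liminf_deriv_right_le (f' := g')
    · exact fun t ht => (hgd t ht).continuousAt.continuousWithinAt
    · intro t ht r hr
      have h := ((hgd t (Set.Ico_subset_Icc_self ht)).hasDerivWithinAt
        (s := Set.Ici t)).liminf_right_slope_le hr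
      exact h.mono fun z hz => by
        simpa [slope_def_field, div_eq_inv_mul] using hz
    · exact le_rfl
    · exact bound
  have hmain : ∀ t ∈ Set.Icc (0:ℝ) T, ‖x₁ t - x₂ t‖ ≤ Real.exp (δ * t) * ‖x₁ 0 - x₂ 0‖ := by
    intro t ht
    have h1 := hgron t ht
    rw [sub_zero, gronwallBound_ε0] at h1
    have hgt : g t = ‖x₁ t - x₂ t‖ ^ 2 := by
      rw [hg]; exact real_inner_self_eq_norm_sq (y t)
    have hg0 : g 0 = ‖x₁ 0 - x₂ 0‖ ^ 2 := by
      rw [hg]; exact real_inner_self_eq_norm_sq (y 0)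
    have h2 : ‖x₁ t - x₂ t‖ ^ 2 ≤ (Real.exp (δ * t) * ‖x₁ 0 - x₂ 0‖) ^ 2 := by
      rw [← hgt, mul_pow, ← Real.exp_nat_mul]
      calc g t ≤ g 0 * Real.exp (2 * δ * t) := h1
        _ = Real.exp ((2:ℕ) * (δ * t)) * ‖x₁ 0 - x₂ 0‖ ^ 2 := by
            rw [hg0]; ring_nf
      -- possibly a cast issue
    calc ‖x₁ t - x₂ t‖ = Real.sqrt (‖x₁ t - x₂ t‖ ^ 2) :=
          (Real.sqrt_sq (norm_nonneg _)).symm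
      _ ≤ Real.sqrt ((Real.exp (δ * t) * ‖x₁ 0 - x₂ 0‖) ^ 2) := Real.sqrt_le_sqrt h2
      _ = Real.exp (δ * t) * ‖x₁ 0 - x₂ 0‖ := Real.sqrt_sq (by positivity)
  exact ⟨hmain, hmain T (Set.right_mem_Icc.mpr hT.le)⟩
end
end

section
/- Let A be a real n×n matrix, ε > 0, δ ∈ ℝ, D a real n×n diagonal matrix, and let E : ℝ → ℝ^{n×n} be differentiable. Suppose λ₁,…,λₙ : ℝ → ℝ and x₁,…,xₙ : ℝ → ℝⁿ are differentiable with Sym(D(A + ε E(t))) xᵢ(t) = λᵢ(t) xᵢ(t) and ‖xᵢ(t)‖ = 1 for all t and all i. Define γᵢ(t) = max(λᵢ(t) − δ, 0), the functional F(t) = (1/2) Σᵢ γᵢ(t)², and the matrix G(t) = Σᵢ γᵢ(t) (D xᵢ(t)) xᵢ(t)ᵀ. Then F is differentiable with F'(t) = ε ⟨G(t), E'(t)⟩_F for every t. -/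
open Matrix
open scoped RealInnerProductSpace

noncomputable section

/-- Frobenius inner product ⟨M, N⟩_F = tr(Nᵀ M). -/
def frobInner {n : ℕ} (M N : Matrix (Fin n) (Fin n) ℝ) : ℝ :=
  Matrix.trace (Nᵀ * M)

/-- Frobenius norm ‖M‖_F = √⟨M, M⟩_F. -/
def frobNorm {n : ℕ} (M : Matrix (Fin n) (Fin n) ℝ) : ℝ :=
  Real.sqrt (frobInner M M)

/-- Euclidean 2-norm of a vector in ℝⁿ. -/
def vecEnorm {n : ℕ} (v : Fin n → ℝ) : ℝ :=
  Real.sqrt (∑ i, v i ^ 2)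

lemma mul_abs_hasDerivAt (u : ℝ) : HasDerivAt (fun v : ℝ => v * |v|) (2 * |u|) u := by
  rcases lt_trichotomy u 0 with h | h | h
  · have hd : HasDerivAt (fun v : ℝ => -(v * v)) (2 * |u|) u := by
      have := ((hasDerivAt_id u).mul (hasDerivAt_id u)).neg
      refine this.congr_deriv ?_
      rw [abs_of_neg h]; simp only [id_eq]; ring
    refine hd.congr_of_eventuallyEq ?_
    filter_upwards [Iio_mem_nhds h] with v hv
    rw [abs_of_neg hv]; ring
  · subst h
    rw [hasDerivAt_iff_tendsto_slope]
    have hev : (fun v : ℝ => |v|) =ᶠ[nhdsWithin (0:ℝ) {(0:ℝ)}ᶜ] slope (fun v : ℝ => v * |v|) 0 := by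
      filter_upwards [self_mem_nhdsWithin] with v hv
      have hv' : v ≠ 0 := hv
      rw [slope_def_field]
      field_simp
      simp
    have : Filter.Tendsto (fun v : ℝ => |v|) (nhdsWithin (0:ℝ) {(0:ℝ)}ᶜ) (nhds (2 * |(0:ℝ)|)) := by
      have h0 := (continuous_abs.tendsto (0:ℝ)).mono_left
        (nhdsWithin_le_nhds (s := ({(0:ℝ)}ᶜ : Set ℝ)))
      simpa using h0
    exact this.congr' hev
  · have hd : HasDerivAt (fun v : ℝ => v * v) (2 * |u|) u := by
      have := (hasDerivAt_id u).mul (hasDerivAt_id u)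
      refine this.congr_deriv ?_
      rw [abs_of_pos h]; simp only [id_eq]; ring
    refine hd.congr_of_eventuallyEq ?_
    filter_upwards [Ioi_mem_nhds h] with v hv
    rw [abs_of_pos hv]

lemma maxsq_hasDerivAt (u : ℝ) : HasDerivAt (fun v : ℝ => max v 0 ^ 2) (2 * max u 0) u := by
  have heq : (fun v : ℝ => max v 0 ^ 2) = fun v => (v ^ 2 + v * |v|) / 2 := by
    funext v
    rcases le_total v 0 with h | h
    · rw [max_eq_right h, abs_of_nonpos h]; ring
    · rw [max_eq_left h, abs_of_nonneg h]; ring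
  rw [heq]
  have h1 : HasDerivAt (fun v : ℝ => v ^ 2) (2 * u) u := by
    simpa using hasDerivAt_pow 2 u
  have := (h1.add (mul_abs_hasDerivAt u)).div_const 2
  refine this.congr_deriv ?_
  rcases le_total u 0 with h | h
  · rw [max_eq_right h, abs_of_nonpos h]; ring
  · rw [max_eq_left h, abs_of_nonneg h]; ring

lemma maxsq_shift (δ u : ℝ) :
    HasDerivAt (fun v : ℝ => max (v - δ) 0 ^ 2) (2 * max (u - δ) 0) u := by
  have := (maxsq_hasDerivAt (u - δ)).comp u ((hasDerivAt_id u).sub_const δ)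
  simpa [Function.comp_def] using this

/-- Derivative of the functional F(t) = (1/2) Σᵢ ((λᵢ(t) − δ)₊)² along the eigenvalues of
Sym(D(A + εE(t))): F'(t) = ε ⟨G(t), E'(t)⟩_F with the free gradient
G(t) = Σᵢ γᵢ(t)(D xᵢ(t)) xᵢ(t)ᵀ. -/
theorem functional_derivative_free_gradient
    {n : ℕ} (A : Matrix (Fin n) (Fin n) ℝ) (ε : ℝ) (hε : 0 < ε) (δ : ℝ)
    (D : Matrix (Fin n) (Fin n) ℝ) (hD : D.IsDiag)
    (E E' : ℝ → Matrix (Fin n) (Fin n) ℝ)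
    (hE : ∀ t i j, HasDerivAt (fun s => E s i j) (E' t i j) t)
    (lam lam' : Fin n → ℝ → ℝ) (x x' : Fin n → ℝ → Fin n → ℝ)
    (hlam : ∀ i t, HasDerivAt (lam i) (lam' i t) t)
    (hx : ∀ i t j, HasDerivAt (fun s => x i s j) (x' i t j) t)
    (heig : ∀ i t, (symPart (D * (A + ε • E t))).mulVec (x i t) = lam i t • x i t)
    (hnorm : ∀ i t, vecEnorm (x i t) = 1) :
    ∀ t, HasDerivAt
      (fun s => (1/2 : ℝ) * ∑ i, max (lam i s - δ) 0 ^ 2)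
      (ε * frobInner
        (∑ i, max (lam i t - δ) 0 • Matrix.vecMulVec (D.mulVec (x i t)) (x i t))
        (E' t)) t := by
  intro t
  set M : ℝ → Matrix (Fin n) (Fin n) ℝ := fun s => symPart (D * (A + ε • E s)) with hMdef
  set N : Matrix (Fin n) (Fin n) ℝ := D * E' t with hNdef
  -- D is symmetric
  have hDsymm : ∀ a b : Fin n, D a b = D b a := by
    intro a b
    by_cases h : a = b
    · rw [h]
    · rw [hD h, hD (Ne.symm h)]
  -- M is symmetric
  have hMsymm : ∀ s (j k : Fin n), M s j k = M s k j := by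
    intro s j k
    simp only [hMdef, symPart, Matrix.smul_apply, Matrix.add_apply, Matrix.transpose_apply,
      smul_eq_mul]
    ring
  -- norm squared is 1
  have hns : ∀ i s, ∑ j, x i s j ^ 2 = 1 := by
    intro i s
    have h := hnorm i s
    unfold vecEnorm at h
    have h0 : (0:ℝ) ≤ ∑ j, x i s j ^ 2 := Finset.sum_nonneg fun j _ => sq_nonneg _
    have h2 := Real.sq_sqrt h0
    rw [h] at h2
    simpa using h2.symm
  -- orthogonality of x' and x
  have hortho : ∀ i, ∑ j, x' i t j * x i t j = 0 := by
    intro i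
    have hderiv : HasDerivAt (fun s => ∑ j, x i s j ^ 2) (∑ j, 2 * x i t j * x' i t j) t :=
      HasDerivAt.fun_sum fun j _ => by simpa using (hx i t j).fun_pow 2
    have hconst : HasDerivAt (fun s => ∑ j, x i s j ^ 2) 0 t := by
      have he : (fun s => ∑ j, x i s j ^ 2) = fun _ => (1:ℝ) := funext (hns i)
      rw [he]; exact hasDerivAt_const t 1
    have hz := hderiv.unique hconst
    have h2 : ∑ j, x' i t j * x i t j = (1/2) * ∑ j, 2 * x i t j * x' i t j := by
      rw [Finset.mul_sum]; exact Finset.sum_congr rfl fun j _ => by ring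
    rw [h2, hz, mul_zero]
  -- entrywise derivative of M
  have hMd : ∀ j k : Fin n, HasDerivAt (fun s => M s j k)
      (ε * ((1/2) * (N j k + N k j))) t := by
    intro j k
    have base : ∀ l m : Fin n,
        HasDerivAt (fun s => (D * (A + ε • E s)) l m) (ε * N l m) t := by
      intro l m
      have h2 : HasDerivAt (fun s => ∑ p, D l p * (A p m + ε * E s p m))
          (∑ p, D l p * (ε * E' t p m)) t :=
        HasDerivAt.fun_sum fun p _ =>
          (((hE t p m).const_mul ε).const_add (A p m)).const_mul (D l p)
      have he1 : (fun s => (D * (A + ε • E s)) l m)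
          = fun s => ∑ p, D l p * (A p m + ε * E s p m) := by
        funext s
        simp [Matrix.mul_apply, Matrix.add_apply, Matrix.smul_apply, smul_eq_mul]
      have he2 : ε * N l m = ∑ p, D l p * (ε * E' t p m) := by
        rw [hNdef]
        rw [Matrix.mul_apply, Finset.mul_sum]
        exact Finset.sum_congr rfl fun p _ => by ring
      rw [he1, he2]; exact h2
    have hc := ((base j k).add (base k j)).const_mul (1/2 : ℝ)
    have heq : (fun s => M s j k)
        = fun s => (1/2:ℝ) * ((D * (A + ε • E s)) j k + (D * (A + ε • E s)) k j) := by
      funext s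
      simp only [hMdef, symPart, Matrix.smul_apply, Matrix.add_apply, Matrix.transpose_apply,
        smul_eq_mul]
    rw [heq]
    refine hc.congr_deriv ?_; ring
  -- eigen equation entrywise
  have heig' : ∀ i s (j : Fin n), ∑ k, M s j k * x i s k = lam i s * x i s j := by
    intro i s j
    have h := congrFun (heig i s) j
    simpa [Matrix.mulVec, dotProduct, hMdef, smul_eq_mul] using h
  -- lam as quadratic form
  have hlam_eq : ∀ i s, lam i s = ∑ j, ∑ k, M s j k * (x i s k * x i s j) := by
    intro i s
    have h1 : ∑ j, ∑ k, M s j k * (x i s k * x i s j) = ∑ j, (lam i s * x i s j) * x i s j := by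
      refine Finset.sum_congr rfl fun j _ => ?_
      rw [← heig' i s j, Finset.sum_mul]
      exact Finset.sum_congr rfl fun k _ => by ring
    have h2 : ∑ j, (lam i s * x i s j) * x i s j = lam i s * ∑ j, x i s j ^ 2 := by
      rw [Finset.mul_sum]; exact Finset.sum_congr rfl fun j _ => by ring
    rw [h1, h2, hns i s, mul_one]
  -- derivative of lam via quadratic form
  have hlam' : ∀ i, lam' i t = ε * ∑ j, ∑ k, N j k * (x i t k * x i t j) := by
    intro i
    have hφ : HasDerivAt (fun s => ∑ j, ∑ k, M s j k * (x i s k * x i s j))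
        (∑ j, ∑ k, ((ε * ((1/2) * (N j k + N k j))) * (x i t k * x i t j)
          + M t j k * (x' i t k * x i t j + x i t k * x' i t j))) t := by
      refine HasDerivAt.fun_sum fun j _ => HasDerivAt.fun_sum fun k _ => ?_
      exact (hMd j k).mul ((hx i t k).mul (hx i t j))
    have h1 : HasDerivAt (lam i)
        (∑ j, ∑ k, ((ε * ((1/2) * (N j k + N k j))) * (x i t k * x i t j)
          + M t j k * (x' i t k * x i t j + x i t k * x' i t j))) t := by
      have heq : lam i = fun s => ∑ j, ∑ k, M s j k * (x i s k * x i s j) :=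
        funext (hlam_eq i)
      rw [heq]; exact hφ
    have huniq := (hlam i t).unique h1
    rw [huniq]
    have hsplit : ∑ j, ∑ k, ((ε * ((1/2) * (N j k + N k j))) * (x i t k * x i t j)
          + M t j k * (x' i t k * x i t j + x i t k * x' i t j))
        = (∑ j, ∑ k, (ε * ((1/2) * (N j k + N k j))) * (x i t k * x i t j))
          + (∑ j, ∑ k, M t j k * (x' i t k * x i t j))
          + (∑ j, ∑ k, M t j k * (x i t k * x' i t j)) := by
      rw [← Finset.sum_add_distrib, ← Finset.sum_add_distrib]
      refine Finset.sum_congr rfl fun j _ => ?_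
      rw [← Finset.sum_add_distrib, ← Finset.sum_add_distrib]
      exact Finset.sum_congr rfl fun k _ => by ring
    have hp2 : ∑ j, ∑ k, M t j k * (x' i t k * x i t j) = 0 := by
      rw [Finset.sum_comm]
      have hk : ∀ k : Fin n, ∑ j, M t j k * (x' i t k * x i t j)
          = x' i t k * (lam i t * x i t k) := by
        intro k
        have h : ∑ j, M t j k * (x' i t k * x i t j) = x' i t k * ∑ j, M t k j * x i t j := by
          rw [Finset.mul_sum]
          refine Finset.sum_congr rfl fun j _ => ?_
          rw [hMsymm t j k]; ring
        rw [h, heig' i t k]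
      rw [Finset.sum_congr rfl fun k _ => hk k]
      have h : ∑ k, x' i t k * (lam i t * x i t k) = lam i t * ∑ k, x' i t k * x i t k := by
        rw [Finset.mul_sum]; exact Finset.sum_congr rfl fun k _ => by ring
      rw [h, hortho i, mul_zero]
    have hp3 : ∑ j, ∑ k, M t j k * (x i t k * x' i t j) = 0 := by
      have hj : ∀ j : Fin n, ∑ k, M t j k * (x i t k * x' i t j)
          = x' i t j * (lam i t * x i t j) := by
        intro j
        have h : ∑ k, M t j k * (x i t k * x' i t j) = x' i t j * ∑ k, M t j k * x i t k := by
          rw [Finset.mul_sum]; exact Finset.sum_congr rfl fun k _ => by ring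
        rw [h, heig' i t j]
      rw [Finset.sum_congr rfl fun j _ => hj j]
      have h : ∑ j, x' i t j * (lam i t * x i t j) = lam i t * ∑ j, x' i t j * x i t j := by
        rw [Finset.mul_sum]; exact Finset.sum_congr rfl fun j _ => by ring
      rw [h, hortho i, mul_zero]
    have hswap : ∑ j, ∑ k, N k j * (x i t k * x i t j)
        = ∑ j, ∑ k, N j k * (x i t k * x i t j) := by
      rw [Finset.sum_comm]
      exact Finset.sum_congr rfl fun j _ => Finset.sum_congr rfl fun k _ => by ring
    have hp1 : ∑ j, ∑ k, (ε * ((1/2) * (N j k + N k j))) * (x i t k * x i t j)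
        = ε * ∑ j, ∑ k, N j k * (x i t k * x i t j) := by
      have e1 : ∑ j, ∑ k, (ε * ((1/2) * (N j k + N k j))) * (x i t k * x i t j)
          = (ε/2) * ((∑ j, ∑ k, N j k * (x i t k * x i t j))
            + ∑ j, ∑ k, N k j * (x i t k * x i t j)) := by
        rw [mul_add, Finset.mul_sum, Finset.mul_sum, ← Finset.sum_add_distrib]
        refine Finset.sum_congr rfl fun j _ => ?_
        rw [Finset.mul_sum, Finset.mul_sum, ← Finset.sum_add_distrib]
        exact Finset.sum_congr rfl fun k _ => by ring
      rw [e1, hswap]; ring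
    rw [hsplit, hp2, hp3, add_zero, add_zero, hp1]
  -- the key reindexing identity
  have hkey : ∀ v : Fin n → ℝ,
      ∑ p, ∑ q, E' t q p * ((∑ m, D q m * v m) * v p)
        = ∑ j, ∑ k, N j k * (v k * v j) := by
    intro v
    have lhs1 : ∑ p, ∑ q, E' t q p * ((∑ m, D q m * v m) * v p)
        = ∑ p, ∑ q, ∑ m, E' t q p * D q m * v m * v p := by
      refine Finset.sum_congr rfl fun p _ => Finset.sum_congr rfl fun q _ => ?_
      rw [Finset.sum_mul, Finset.mul_sum]
      exact Finset.sum_congr rfl fun m _ => by ring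
    have rhs1 : ∑ j, ∑ k, N j k * (v k * v j)
        = ∑ j, ∑ k, ∑ m, D j m * E' t m k * v k * v j := by
      refine Finset.sum_congr rfl fun j _ => Finset.sum_congr rfl fun k _ => ?_
      rw [hNdef, Matrix.mul_apply, Finset.sum_mul]
      exact Finset.sum_congr rfl fun m _ => by ring
    rw [lhs1, rhs1]
    -- reorder rhs: ∑ j ∑ k ∑ m → ∑ m ∑ k ∑ j
    rw [show (∑ j, ∑ k, ∑ m, D j m * E' t m k * v k * v j)
        = ∑ k, ∑ j, ∑ m, D j m * E' t m k * v k * v j from Finset.sum_comm]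
    rw [show (∑ k, ∑ j, ∑ m, D j m * E' t m k * v k * v j)
        = ∑ k, ∑ m, ∑ j, D j m * E' t m k * v k * v j from
      Finset.sum_congr rfl fun k _ => Finset.sum_comm]
    rw [show (∑ p, ∑ q, ∑ m, E' t q p * D q m * v m * v p)
        = ∑ q, ∑ p, ∑ m, E' t q p * D q m * v m * v p from Finset.sum_comm]
    -- now lhs: ∑ q ∑ p ∑ m, E'_{qp} D_{qm} v_m v_p ; rhs: ∑ k ∑ m ∑ j, D_{jm} E'_{mk} v_k v_j
    -- match q↔m(rhs index2? ) : take rhs outer k = p, middle m = q, inner j = m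
    refine Finset.sum_comm.trans ?_
    refine Finset.sum_congr rfl fun p _ => Finset.sum_congr rfl fun q _ =>
      Finset.sum_congr rfl fun m _ => ?_
    rw [hDsymm m q]; ring
  -- rewrite the goal derivative
  have hfrob : frobInner
      (∑ i, max (lam i t - δ) 0 • Matrix.vecMulVec (D.mulVec (x i t)) (x i t)) (E' t)
      = ∑ i, max (lam i t - δ) 0 *
          ∑ p, ∑ q, E' t q p * ((∑ m, D q m * x i t m) * x i t p) := by
    unfold frobInner Matrix.trace
    simp only [Matrix.diag_apply, Matrix.mul_apply, Matrix.transpose_apply, Matrix.sum_apply,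
      Matrix.smul_apply, Matrix.vecMulVec_apply, Matrix.mulVec, dotProduct, smul_eq_mul]
    have step : ∀ p q : Fin n,
        E' t q p * (∑ i, max (lam i t - δ) 0 * ((∑ m, D q m * x i t m) * x i t p))
        = ∑ i, max (lam i t - δ) 0 * (E' t q p * ((∑ m, D q m * x i t m) * x i t p)) := by
      intro p q
      rw [Finset.mul_sum]
      exact Finset.sum_congr rfl fun i _ => by ring
    rw [Finset.sum_congr rfl fun p (_ : p ∈ (Finset.univ : Finset (Fin n))) =>
      Finset.sum_congr rfl fun q (_ : q ∈ (Finset.univ : Finset (Fin n))) => step p q]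
    rw [Finset.sum_congr rfl fun p (_ : p ∈ (Finset.univ : Finset (Fin n))) =>
      (Finset.sum_comm (s := Finset.univ) (t := Finset.univ)
        (f := fun q i => max (lam i t - δ) 0 *
          (E' t q p * ((∑ m, D q m * x i t m) * x i t p))))]
    rw [Finset.sum_comm]
    refine Finset.sum_congr rfl fun i _ => ?_
    rw [Finset.mul_sum]
    refine Finset.sum_congr rfl fun p _ => ?_
    rw [Finset.mul_sum]
  have hRHS : ε * frobInner
      (∑ i, max (lam i t - δ) 0 • Matrix.vecMulVec (D.mulVec (x i t)) (x i t)) (E' t)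
      = ∑ i, max (lam i t - δ) 0 * lam' i t := by
    rw [hfrob, Finset.mul_sum]
    refine Finset.sum_congr rfl fun i _ => ?_
    rw [hkey (x i t), hlam' i]
    ring
  -- main derivative computation
  rw [hRHS]
  have h1 : HasDerivAt (fun s => ∑ i, max (lam i s - δ) 0 ^ 2)
      (∑ i, 2 * max (lam i t - δ) 0 * lam' i t) t := by
    refine HasDerivAt.fun_sum fun i _ => ?_
    have hcomp := (maxsq_shift δ (lam i t)).comp t (hlam i t)
    simpa [Function.comp_def, mul_assoc] using hcomp
  have h2 := h1.const_mul (1/2 : ℝ)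
  refine h2.congr_deriv ?_
  rw [Finset.mul_sum]
  exact Finset.sum_congr rfl fun i _ => by ring
end
end

section
/- Let G and E be real n×n matrices with G ≠ 0 and ‖E‖_F = 1, and set Ė = −G + ⟨G, E⟩_F E. Then the following three statements are equivalent: (1) ⟨G, Ė⟩_F = 0; (2) Ė = 0; (3) E is a real multiple of G, i.e. there exists c ∈ ℝ with G = c E. (This characterises the stationary points of the constrained gradient system Ė = −G + ⟨G,E⟩_F E when the free gradient G is nonzero, which holds whenever at least one eigenvalue of Sym(D⋆(A + εE)) exceeds δ.) -/
open Matrix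
open scoped RealInnerProductSpace

noncomputable section

lemma frobInner_eq_sum {n : ℕ} (M N : Matrix (Fin n) (Fin n) ℝ) :
    frobInner M N = ∑ i, ∑ j, M i j * N i j := by
  simp [frobInner, Matrix.trace, Matrix.mul_apply, Matrix.diag, mul_comm]
  exact Finset.sum_comm

lemma frobInner_self_eq_sum_sq {n : ℕ} (M : Matrix (Fin n) (Fin n) ℝ) :
    frobInner M M = ∑ i, ∑ j, (M i j) ^ 2 := by
  rw [frobInner_eq_sum]
  congr 1; ext i; congr 1; ext j; ring

lemma frobInner_self_nonneg {n : ℕ} (M : Matrix (Fin n) (Fin n) ℝ) :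
    0 ≤ frobInner M M := by
  rw [frobInner_self_eq_sum_sq]
  positivity

lemma frobInner_self_eq_zero {n : ℕ} (M : Matrix (Fin n) (Fin n) ℝ) :
    frobInner M M = 0 ↔ M = 0 := by
  rw [frobInner_self_eq_sum_sq]
  constructor
  · intro h
    ext i j
    have h1 : ∀ i ∈ Finset.univ, (0:ℝ) ≤ ∑ j, (M i j) ^ 2 := by
      intro i _; positivity
    have h2 := (Finset.sum_eq_zero_iff_of_nonneg h1).mp h i (Finset.mem_univ i)
    have h3 : ∀ j ∈ Finset.univ, (0:ℝ) ≤ (M i j) ^ 2 := by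
      intro j _; positivity
    have h4 := (Finset.sum_eq_zero_iff_of_nonneg h3).mp h2 j (Finset.mem_univ j)
    have := pow_eq_zero_iff (n := 2) (by norm_num) |>.mp h4
    simpa using this
  · intro h; subst h; simp

lemma frobInner_expand {n : ℕ} (G E : Matrix (Fin n) (Fin n) ℝ) (c : ℝ) :
    frobInner G (-G + c • E) = -frobInner G G + c * frobInner G E := by
  simp only [frobInner_eq_sum, Matrix.add_apply, Matrix.neg_apply, Matrix.smul_apply,
    smul_eq_mul, Finset.mul_sum, ← Finset.sum_neg_distrib, ← Finset.sum_add_distrib]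
  congr 1; ext i
  congr 1; ext j
  ring

lemma frobInner_expand' {n : ℕ} (G E : Matrix (Fin n) (Fin n) ℝ) (c : ℝ) :
    frobInner (-G + c • E) (-G + c • E) =
      frobInner G G - 2 * c * frobInner G E + c ^ 2 * frobInner E E := by
  simp only [frobInner_eq_sum, Matrix.add_apply, Matrix.neg_apply, Matrix.smul_apply,
    smul_eq_mul, Finset.mul_sum, sub_eq_add_neg, ← Finset.sum_neg_distrib,
    ← Finset.sum_add_distrib]
  congr 1; ext i
  congr 1; ext j
  ring

lemma frobInner_smul_left {n : ℕ} (E : Matrix (Fin n) (Fin n) ℝ) (d : ℝ) :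
    frobInner (d • E) E = d * frobInner E E := by
  simp only [frobInner_eq_sum, Matrix.smul_apply, smul_eq_mul, Finset.mul_sum]
  congr 1; ext i
  congr 1; ext j
  ring

/-- Characterisation of stationary points of the constrained gradient system
Ė = −G + ⟨G,E⟩_F E when G ≠ 0 and ‖E‖_F = 1: the statements
(1) ⟨G, Ė⟩_F = 0, (2) Ė = 0, (3) G is a real multiple of E, are equivalent. -/
theorem stationary_points_characterisation
    {n : ℕ} (G E : Matrix (Fin n) (Fin n) ℝ) (hG : G ≠ 0) (hE : frobNorm E = 1) :
    (frobInner G (-G + frobInner G E • E) = 0 ↔ -G + frobInner G E • E = 0) ∧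
    (-G + frobInner G E • E = 0 ↔ ∃ c : ℝ, G = c • E) := by
  set c : ℝ := frobInner G E with hc
  have hEE : frobInner E E = 1 := by
    have h := hE
    rw [frobNorm] at h
    nlinarith [Real.sq_sqrt (frobInner_self_nonneg E)]
  constructor
  · constructor
    · intro h1
      rw [frobInner_expand] at h1
      rw [← frobInner_self_eq_zero, frobInner_expand', hEE]
      nlinarith
    · intro h2
      rw [frobInner_expand]
      have h0 : frobInner (-G + c • E) (-G + c • E) = 0 := by
        rw [h2]; simp [frobInner_eq_sum]
      rw [frobInner_expand', hEE] at h0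
      nlinarith
  · constructor
    · intro h2
      exact ⟨c, neg_add_eq_zero.mp h2⟩
    · rintro ⟨d, rfl⟩
      have hcd : c = d := by
        rw [hc, ← hc]  -- keep c as frobInner (d•E) E
        rw [hc, frobInner_smul_left, hEE, mul_one]
      rw [hcd]
      ext i j
      simp
end
end

section
/- Let S be a real symmetric n×n matrix with eigenvalues λ₁(S),…,λₙ(S), and let δ ∈ ℝ. Then there exists a real symmetric n×n matrix Δ with ‖Δ‖_F = (Σᵢ ((λᵢ(S) − δ)₊)²)^{1/2} such that every eigenvalue of S + Δ is at most δ, i.e. λ_max(S + Δ) ≤ δ. (This is the diagonal shift in the Schur/spectral form used to bound the optimal perturbation size ε⋆ from above.) -/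
open Matrix
open scoped RealInnerProductSpace

noncomputable section

/-- Shifting the eigenvalues of a symmetric matrix S that exceed δ down to δ:
there is a symmetric Δ with ‖Δ‖_F = (Σᵢ ((λᵢ(S) − δ)₊)²)^{1/2} such that every
eigenvalue of S + Δ is at most δ. -/
theorem symmetric_shift_to_delta
    {n : ℕ} (S : Matrix (Fin n) (Fin n) ℝ) (hS : S.IsHermitian) (δ : ℝ) :
    ∃ Δ : Matrix (Fin n) (Fin n) ℝ, Δ.IsHermitian ∧
      frobNorm Δ = Real.sqrt (∑ i, max (hS.eigenvalues i - δ) 0 ^ 2) ∧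
      ∀ μ ∈ spectrum ℝ (S + Δ), μ ≤ δ := by
  classical
  set U : Matrix (Fin n) (Fin n) ℝ := (hS.eigenvectorUnitary : Matrix (Fin n) (Fin n) ℝ) with hU
  have hUmem : U ∈ Matrix.unitaryGroup (Fin n) ℝ := hS.eigenvectorUnitary.2
  have hUU : star U * U = 1 := (Matrix.mem_unitaryGroup_iff').mp hUmem
  have hUU' : U * star U = 1 := (Matrix.mem_unitaryGroup_iff).mp hUmem
  set c : Fin n → ℝ := fun i => -(max (hS.eigenvalues i - δ) 0) with hc
  set Δ : Matrix (Fin n) (Fin n) ℝ := U * Matrix.diagonal c * star U with hΔ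
  have hDherm : Δ.IsHermitian := by
    rw [hΔ, Matrix.star_eq_conjTranspose]
    exact Matrix.isHermitian_mul_mul_conjTranspose U (Matrix.isHermitian_diagonal c)
  refine ⟨Δ, hDherm, ?_, ?_⟩
  · have htr : frobInner Δ Δ = ∑ i, max (hS.eigenvalues i - δ) 0 ^ 2 := by
      have hT : Δᵀ = Δ := by
        have := hDherm
        simpa [Matrix.IsHermitian, Matrix.conjTranspose_eq_transpose_of_trivial] using this
      rw [frobInner, hT, hΔ]
      rw [show U * Matrix.diagonal c * star U * (U * Matrix.diagonal c * star U)
          = U * (Matrix.diagonal c * (star U * U) * Matrix.diagonal c) * star U by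
        noncomm_ring]
      rw [hUU, mul_one, Matrix.diagonal_mul_diagonal]
      rw [Matrix.trace_mul_cycle, hUU, one_mul, Matrix.trace_diagonal]
      simp [hc, pow_two]
    rw [frobNorm, htr]
  · intro μ hμ
    have hid : (RCLike.ofReal ∘ hS.eigenvalues : Fin n → ℝ) = hS.eigenvalues := by
      funext i; simp
    have hsum : S + Δ = (hS.eigenvectorUnitary : Matrix (Fin n) (Fin n) ℝ) *
        Matrix.diagonal (fun i => hS.eigenvalues i + c i) *
        star (hS.eigenvectorUnitary : Matrix (Fin n) (Fin n) ℝ) := by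
      conv_lhs => rw [hS.spectral_theorem, hΔ]
      rw [Unitary.conjStarAlgAut_apply, hid, hU, ← Matrix.add_mul, ← Matrix.mul_add, ← Matrix.diagonal_add]
    rw [hsum, Unitary.spectrum_star_right_conjugate, spectrum_diagonal] at hμ
    obtain ⟨i, hi⟩ := hμ
    rw [← hi, hc]
    rcases le_or_gt (hS.eigenvalues i) δ with h | h
    · simp only [max_eq_right (sub_nonpos.mpr h), neg_zero, add_zero]
      exact h
    · simp [max_eq_left (sub_nonneg.mpr h.le)]
end
end

section
/- Let n ≥ 1, 0 < m ≤ 1, let σ : ℝ → ℝ be differentiable with m ≤ σ'(s) ≤ 1 for all s ∈ ℝ, let A₁, A₂ be real n×n matrices and b₁, b₂ ∈ ℝⁿ, and define the two-layer vector field f(x) = σ(A₂ σ(A₁ x + b₁) + b₂). Then for all x, y ∈ ℝⁿ there exist D₁, D₂ ∈ Ω_m such that f(x) − f(y) = D₂ A₂ D₁ A₁ (x − y). -/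
open Matrix
open scoped RealInnerProductSpace

noncomputable section

lemma slope_exists {m : ℝ} {σ : ℝ → ℝ} (hσ : Differentiable ℝ σ)
    (hσ' : ∀ s : ℝ, m ≤ deriv σ s ∧ deriv σ s ≤ 1) (u v : ℝ) :
    ∃ c : ℝ, m ≤ c ∧ c ≤ 1 ∧ σ u - σ v = c * (u - v) := by
  rcases lt_trichotomy u v with h | h | h
  · obtain ⟨c, _, hc⟩ := exists_deriv_eq_slope σ h (hσ.continuous.continuousOn)
      (fun s _ => (hσ s).differentiableWithinAt)
    rw [eq_div_iff (sub_ne_zero.2 h.ne')] at hc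
    exact ⟨deriv σ c, (hσ' c).1, (hσ' c).2, by linear_combination hc⟩
  · exact ⟨m, le_refl m, by linarith [(hσ' 0).1, (hσ' 0).2], by rw [h]; ring⟩
  · obtain ⟨c, _, hc⟩ := exists_deriv_eq_slope σ h (hσ.continuous.continuousOn)
      (fun s _ => (hσ s).differentiableWithinAt)
    rw [eq_div_iff (sub_ne_zero.2 h.ne')] at hc
    exact ⟨deriv σ c, (hσ' c).1, (hσ' c).2, by linear_combination -hc⟩

/-- Two-layer increment factorisation: for f(x) = σ(A₂ σ(A₁ x + b₁) + b₂) and any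
x, y there are D₁, D₂ ∈ Ω_m with f(x) − f(y) = D₂ A₂ D₁ A₁ (x − y). -/
theorem increment_factorisation_two_layer
    {n : ℕ} (hn : 1 ≤ n) (m : ℝ) (hm0 : 0 < m) (hm1 : m ≤ 1)
    (σ : ℝ → ℝ) (hσ : Differentiable ℝ σ)
    (hσ' : ∀ s : ℝ, m ≤ deriv σ s ∧ deriv σ s ≤ 1)
    (A₁ A₂ : Matrix (Fin n) (Fin n) ℝ) (b₁ b₂ : Fin n → ℝ) :
    ∀ x y : Fin n → ℝ, ∃ D₁ ∈ OmegaSet n m, ∃ D₂ ∈ OmegaSet n m,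
      (fun i => σ ((A₂.mulVec (fun j => σ ((A₁.mulVec x + b₁) j)) + b₂) i))
        - (fun i => σ ((A₂.mulVec (fun j => σ ((A₁.mulVec y + b₁) j)) + b₂) i))
        = (D₂ * A₂ * D₁ * A₁).mulVec (x - y) := by
  intro x y
  choose c₁ hc₁m hc₁1 hc₁ using fun j =>
    slope_exists hσ hσ' ((A₁.mulVec x + b₁) j) ((A₁.mulVec y + b₁) j)
  set u : Fin n → ℝ := fun j => σ ((A₁.mulVec x + b₁) j)
  set v : Fin n → ℝ := fun j => σ ((A₁.mulVec y + b₁) j)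
  choose c₂ hc₂m hc₂1 hc₂ using fun i =>
    slope_exists hσ hσ' ((A₂.mulVec u + b₂) i) ((A₂.mulVec v + b₂) i)
  refine ⟨diagonal c₁, ⟨isDiag_diagonal c₁, fun i => by
      simp [diagonal, hc₁m i, hc₁1 i]⟩,
    diagonal c₂, ⟨isDiag_diagonal c₂, fun i => by
      simp [diagonal, hc₂m i, hc₂1 i]⟩, ?_⟩
  have huv : u - v = (diagonal c₁).mulVec (A₁.mulVec (x - y)) := by
    funext j
    have : (A₁.mulVec x + b₁) j - (A₁.mulVec y + b₁) j = A₁.mulVec (x - y) j := by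
      simp [Matrix.mulVec_sub, Pi.sub_apply]
    simp only [mulVec_diagonal, Pi.sub_apply, u, v]
    rw [hc₁ j, this]
  funext i
  have h2 : (A₂.mulVec u + b₂) i - (A₂.mulVec v + b₂) i = A₂.mulVec (u - v) i := by
    simp [Matrix.mulVec_sub, Pi.sub_apply]
  calc (σ ((A₂.mulVec u + b₂) i)) - (σ ((A₂.mulVec v + b₂) i))
      = c₂ i * A₂.mulVec (u - v) i := by rw [hc₂ i, h2]
    _ = (diagonal c₂).mulVec (A₂.mulVec (u - v)) i := by simp [mulVec_diagonal]
    _ = ((diagonal c₂ * A₂ * diagonal c₁ * A₁).mulVec (x - y)) i := by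
        rw [huv]
        simp only [Matrix.mulVec_mulVec, Matrix.mul_assoc]
end
end

section
/- Let A₁, A₂ be real n×n matrices, ε > 0, δ ∈ ℝ, and let D¹, D² be real n×n diagonal matrices. Let E₁, E₂ : ℝ → ℝ^{n×n} be differentiable, and suppose λ₁,…,λₙ : ℝ → ℝ and x₁,…,xₙ : ℝ → ℝⁿ are differentiable with Sym(D²(A₂ + ε E₂(t)) D¹(A₁ + ε E₁(t))) xᵢ(t) = λᵢ(t) xᵢ(t) and ‖xᵢ(t)‖ = 1 for all t and i. Define γᵢ(t) = max(λᵢ(t) − δ, 0), F(t) = (1/2) Σᵢ γᵢ(t)², and the matrices G₁(t) = Σᵢ γᵢ(t) zᵢ¹(t) xᵢ(t)ᵀ and G₂(t) = Σᵢ γᵢ(t) zᵢ²(t) (wᵢ²(t))ᵀ, where zᵢ¹(t) = D¹ (A₂ + ε E₂(t))ᵀ D² xᵢ(t), zᵢ²(t) = D² xᵢ(t) and wᵢ²(t) = D¹ (A₁ + ε E₁(t)) xᵢ(t). Then F is differentiable with F'(t) = ε (⟨G₁(t), E₁'(t)⟩_F + ⟨G₂(t), E₂'(t)⟩_F) for every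 t. -/
open Matrix
open scoped RealInnerProductSpace

noncomputable section

private lemma hasDerivAt_mul_abs (y : ℝ) : HasDerivAt (fun u : ℝ => u * |u|) (2 * |y|) y := by
  rcases lt_trichotomy y 0 with hy | hy | hy
  · have hev : ∀ᶠ u in nhds y, -(u*u) = u * |u| := by
      filter_upwards [Iio_mem_nhds hy] with u hu
      rw [abs_of_neg hu]; ring
    have h : HasDerivAt (fun u : ℝ => -(u*u)) (2*|y|) y := by
      have := ((hasDerivAt_id y).mul (hasDerivAt_id y)).neg
      simp only [id_eq] at this
      exact this.congr_deriv (by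
      rw [abs_of_neg hy]; ring)
    exact h.congr_of_eventuallyEq (hev.mono fun u h => h.symm)
  · subst hy
    rw [hasDerivAt_iff_isLittleO]
    simp only [abs_zero, mul_zero, zero_mul, sub_zero, smul_eq_mul]
    rw [Asymptotics.isLittleO_iff]
    intro c hc
    filter_upwards [Metric.ball_mem_nhds (0:ℝ) hc] with u hu
    simp only [Metric.mem_ball, Real.dist_eq, sub_zero] at hu
    simp only [Real.norm_eq_abs, abs_mul, abs_abs]
    exact mul_le_mul_of_nonneg_right hu.le (abs_nonneg u)
  · have hev : ∀ᶠ u in nhds y, u*u = u * |u| := by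
      filter_upwards [Ioi_mem_nhds hy] with u hu
      rw [abs_of_pos hu]
    have h : HasDerivAt (fun u : ℝ => u*u) (2*|y|) y := by
      have := (hasDerivAt_id y).mul (hasDerivAt_id y)
      simp only [id_eq] at this
      exact this.congr_deriv (by
      rw [abs_of_pos hy]; ring)
    exact h.congr_of_eventuallyEq (hev.mono fun u h => h.symm)

private lemma hasDerivAt_posPart_sq (y : ℝ) :
    HasDerivAt (fun u : ℝ => max u 0 ^ 2) (2 * max y 0) y := by
  have key : (fun u : ℝ => max u 0 ^ 2) = fun u : ℝ => (u^2 + u * |u|) / 2 := by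
    funext u
    rcases le_or_gt u 0 with h | h
    · rw [max_eq_right h, abs_of_nonpos h]; ring
    · rw [max_eq_left h.le, abs_of_pos h]; ring
  have h1 : HasDerivAt (fun u : ℝ => (u^2 + u * |u|) / 2) ((2*y + 2*|y|)/2) y := by
    have hp : HasDerivAt (fun u : ℝ => u^2) (2*y) y := by
      simpa using hasDerivAt_pow 2 y
    exact (hp.add (hasDerivAt_mul_abs y)).div_const 2
  have h2 : (2*y + 2*|y|)/2 = 2 * max y 0 := by
    rcases le_or_gt y 0 with h | h
    · rw [max_eq_right h, abs_of_nonpos h]; ring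
    · rw [max_eq_left h.le, abs_of_pos h]; ring
  rw [key, ← h2]; exact h1

private lemma hasDerivAt_matmul {n : ℕ} {t : ℝ} {A B : ℝ → Matrix (Fin n) (Fin n) ℝ}
    {A' B' : Matrix (Fin n) (Fin n) ℝ}
    (hA : ∀ j k, HasDerivAt (fun s => A s j k) (A' j k) t)
    (hB : ∀ j k, HasDerivAt (fun s => B s j k) (B' j k) t) (j k : Fin n) :
    HasDerivAt (fun s => (A s * B s) j k) ((A' * B t + A t * B') j k) t := by
  simp only [Matrix.mul_apply, Matrix.add_apply]
  rw [← Finset.sum_add_distrib]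
  apply HasDerivAt.fun_sum
  intro l _
  exact (hA j l).mul (hB l k)

private lemma dot_mulVec_left {n : ℕ} (A : Matrix (Fin n) (Fin n) ℝ) (u v : Fin n → ℝ) :
    u ⬝ᵥ A.mulVec v = (Aᵀ.mulVec u) ⬝ᵥ v := by
  rw [Matrix.dotProduct_mulVec, Matrix.mulVec_transpose]

private lemma frobInner_vecMulVec {n : ℕ} (u v : Fin n → ℝ) (N : Matrix (Fin n) (Fin n) ℝ) :
    frobInner (Matrix.vecMulVec u v) N = u ⬝ᵥ N.mulVec v := by
  simp only [frobInner, Matrix.trace, Matrix.diag, Matrix.mul_apply, Matrix.transpose_apply,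
    Matrix.vecMulVec_apply, dotProduct, Matrix.mulVec, Finset.mul_sum]
  rw [Finset.sum_comm]
  exact Finset.sum_congr rfl fun i _ => Finset.sum_congr rfl fun j _ => by ring

private lemma frobInner_sum_smul {n m : ℕ} (c : Fin m → ℝ) (u v : Fin m → Fin n → ℝ)
    (N : Matrix (Fin n) (Fin n) ℝ) :
    frobInner (∑ i, c i • Matrix.vecMulVec (u i) (v i)) N
      = ∑ i, c i * (u i ⬝ᵥ N.mulVec (v i)) := by
  unfold frobInner
  rw [Finset.mul_sum, Matrix.trace_sum]
  apply Finset.sum_congr rfl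
  intro i _
  rw [Matrix.mul_smul, Matrix.trace_smul, smul_eq_mul]
  congr 1
  exact frobInner_vecMulVec (u i) (v i) N

/-- Two-layer case: derivative of F(t) = (1/2) Σᵢ ((λᵢ(t) − δ)₊)² along the eigenvalues of
Sym(D²(A₂ + εE₂(t)) D¹(A₁ + εE₁(t))): F'(t) = ε (⟨G₁(t), E₁'(t)⟩_F + ⟨G₂(t), E₂'(t)⟩_F),
where G₁ = Σᵢ γᵢ zᵢ¹ xᵢᵀ, G₂ = Σᵢ γᵢ zᵢ² (wᵢ²)ᵀ, zᵢ¹ = D¹(A₂ + εE₂)ᵀ D² xᵢ,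
zᵢ² = D² xᵢ and wᵢ² = D¹(A₁ + εE₁) xᵢ. -/
theorem functional_derivative_two_layer
    {n : ℕ} (A₁ A₂ : Matrix (Fin n) (Fin n) ℝ) (ε : ℝ) (hε : 0 < ε) (δ : ℝ)
    (D₁ D₂ : Matrix (Fin n) (Fin n) ℝ) (hD₁ : D₁.IsDiag) (hD₂ : D₂.IsDiag)
    (E₁ E₁' E₂ E₂' : ℝ → Matrix (Fin n) (Fin n) ℝ)
    (hE₁ : ∀ t i j, HasDerivAt (fun s => E₁ s i j) (E₁' t i j) t)
    (hE₂ : ∀ t i j, HasDerivAt (fun s => E₂ s i j) (E₂' t i j) t)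
    (lam lam' : Fin n → ℝ → ℝ) (x x' : Fin n → ℝ → Fin n → ℝ)
    (hlam : ∀ i t, HasDerivAt (lam i) (lam' i t) t)
    (hx : ∀ i t j, HasDerivAt (fun s => x i s j) (x' i t j) t)
    (heig : ∀ i t,
      (symPart (D₂ * (A₂ + ε • E₂ t) * (D₁ * (A₁ + ε • E₁ t)))).mulVec (x i t)
        = lam i t • x i t)
    (hnorm : ∀ i t, vecEnorm (x i t) = 1) :
    ∀ t, HasDerivAt
      (fun s => (1/2 : ℝ) * ∑ i, max (lam i s - δ) 0 ^ 2)
      (ε * (frobInner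
          (∑ i, max (lam i t - δ) 0 •
            Matrix.vecMulVec
              (D₁.mulVec ((A₂ + ε • E₂ t)ᵀ.mulVec (D₂.mulVec (x i t))))
              (x i t))
          (E₁' t)
        + frobInner
          (∑ i, max (lam i t - δ) 0 •
            Matrix.vecMulVec
              (D₂.mulVec (x i t))
              (D₁.mulVec ((A₁ + ε • E₁ t).mulVec (x i t))))
          (E₂' t))) t := by
  have hD₁s : D₁ᵀ = D₁ := hD₁.isSymm
  have hD₂s : D₂ᵀ = D₂ := hD₂.isSymm
  intro t
  -- notation
  set Pf : ℝ → Matrix (Fin n) (Fin n) ℝ := fun s => D₂ * (A₂ + ε • E₂ s) with hPfdef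
  set Qf : ℝ → Matrix (Fin n) (Fin n) ℝ := fun s => D₁ * (A₁ + ε • E₁ s) with hQfdef
  set P' : Matrix (Fin n) (Fin n) ℝ := D₂ * (ε • E₂' t) with hP'def
  set Q' : Matrix (Fin n) (Fin n) ℝ := D₁ * (ε • E₁' t) with hQ'def
  set M' : Matrix (Fin n) (Fin n) ℝ := P' * Qf t + Pf t * Q' with hM'def
  -- entrywise derivatives of the matrices
  have hA2ent : ∀ j k, HasDerivAt (fun s => (A₂ + ε • E₂ s) j k) ((ε • E₂' t) j k) t := by
    intro j k
    simp only [Matrix.add_apply, Matrix.smul_apply, smul_eq_mul]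
    exact ((hE₂ t j k).const_mul ε).const_add (A₂ j k)
  have hA1ent : ∀ j k, HasDerivAt (fun s => (A₁ + ε • E₁ s) j k) ((ε • E₁' t) j k) t := by
    intro j k
    simp only [Matrix.add_apply, Matrix.smul_apply, smul_eq_mul]
    exact ((hE₁ t j k).const_mul ε).const_add (A₁ j k)
  have hP : ∀ j k, HasDerivAt (fun s => Pf s j k) (P' j k) t := by
    intro j k
    have := hasDerivAt_matmul (t := t) (A := fun _ => D₂) (A' := 0)
      (B := fun s => A₂ + ε • E₂ s) (B' := ε • E₂' t)
      (fun j k => hasDerivAt_const t (D₂ j k)) hA2ent j k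
    simpa [hP'def] using this
  have hQ : ∀ j k, HasDerivAt (fun s => Qf s j k) (Q' j k) t := by
    intro j k
    have := hasDerivAt_matmul (t := t) (A := fun _ => D₁) (A' := 0)
      (B := fun s => A₁ + ε • E₁ s) (B' := ε • E₁' t)
      (fun j k => hasDerivAt_const t (D₁ j k)) hA1ent j k
    simpa [hQ'def] using this
  have hM : ∀ j k, HasDerivAt (fun s => (Pf s * Qf s) j k) (M' j k) t :=
    fun j k => hasDerivAt_matmul hP hQ j k
  -- unit norm facts
  have hxsq1 : ∀ i s, x i s ⬝ᵥ x i s = 1 := by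
    intro i s
    have h := hnorm i s
    rw [vecEnorm, Real.sqrt_eq_one] at h
    simpa [dotProduct, pow_two] using h
  have hxx : ∀ i, x i t ⬝ᵥ x' i t = 0 := by
    intro i
    have hsq : HasDerivAt (fun s => ∑ j, x i s j ^ 2)
        (∑ j, (x' i t j * x i t j + x i t j * x' i t j)) t := by
      apply HasDerivAt.fun_sum
      intro j _
      have h := (hx i t j).fun_mul (hx i t j)
      have heq : (fun s => x i s j * x i s j) = fun s => x i s j ^ 2 := by
        funext s; ring
      rwa [heq] at h
    have hconst : (fun s => ∑ j, x i s j ^ 2) = fun _ => (1:ℝ) := by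
      funext s
      have h := hnorm i s
      rw [vecEnorm, Real.sqrt_eq_one] at h
      exact h
    rw [hconst] at hsq
    have h0 := (hasDerivAt_const t (1:ℝ)).unique hsq
    have h1 : ∑ j, (x' i t j * x i t j + x i t j * x' i t j) = 2 * (x i t ⬝ᵥ x' i t) := by
      rw [dotProduct, Finset.mul_sum]
      exact Finset.sum_congr rfl fun j _ => by ring
    rw [h1] at h0
    linarith
  -- eigenvalue identity: lam i s = xᵀ M x
  have hsymdot : ∀ (N : Matrix (Fin n) (Fin n) ℝ) (v : Fin n → ℝ),
      v ⬝ᵥ (symPart N).mulVec v = v ⬝ᵥ N.mulVec v := by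
    intro N v
    rw [symPart, Matrix.smul_mulVec, Matrix.add_mulVec, dotProduct_smul,
      dotProduct_add, Matrix.mulVec_transpose,
      dotProduct_comm v (v ᵥ* N), ← Matrix.dotProduct_mulVec]
    simp only [smul_eq_mul]
    ring
  have hlamEq : ∀ i s, lam i s = x i s ⬝ᵥ (Pf s * Qf s).mulVec (x i s) := by
    intro i s
    have h := congrArg (fun v => x i s ⬝ᵥ v) (heig i s)
    rw [dotProduct_smul, smul_eq_mul, hxsq1 i s, mul_one] at h
    rw [← h, hsymdot]
  -- differentiate the quadratic form
  have hφ : ∀ i, HasDerivAt (fun s => x i s ⬝ᵥ (Pf s * Qf s).mulVec (x i s))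
      (∑ j, ∑ k, (x' i t j * ((Pf t * Qf t) j k * x i t k)
        + x i t j * (M' j k * x i t k + (Pf t * Qf t) j k * x' i t k))) t := by
    intro i
    simp only [dotProduct, Matrix.mulVec, Finset.mul_sum]
    apply HasDerivAt.fun_sum
    intro j _
    apply HasDerivAt.fun_sum
    intro k _
    exact (hx i t j).mul ((hM j k).mul (hx i t k))
  -- identify the double sum with dot products
  have hDval : ∀ i, (∑ j, ∑ k, (x' i t j * ((Pf t * Qf t) j k * x i t k)
        + x i t j * (M' j k * x i t k + (Pf t * Qf t) j k * x' i t k)))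
      = (x' i t ⬝ᵥ (Pf t * Qf t).mulVec (x i t)
          + x i t ⬝ᵥ (Pf t * Qf t).mulVec (x' i t))
        + x i t ⬝ᵥ M'.mulVec (x i t) := by
    intro i
    simp only [dotProduct, Matrix.mulVec, Finset.mul_sum]
    rw [← Finset.sum_add_distrib, ← Finset.sum_add_distrib]
    apply Finset.sum_congr rfl
    intro j _
    rw [← Finset.sum_add_distrib, ← Finset.sum_add_distrib]
    apply Finset.sum_congr rfl
    intro k _
    ring
  -- cross terms vanish
  have hcross : ∀ i, x' i t ⬝ᵥ (Pf t * Qf t).mulVec (x i t)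
      + x i t ⬝ᵥ (Pf t * Qf t).mulVec (x' i t) = 0 := by
    intro i
    rw [dotProduct_comm (x' i t), dot_mulVec_left (Pf t * Qf t),
      ← add_dotProduct, ← Matrix.add_mulVec]
    have h2 : (Pf t * Qf t + (Pf t * Qf t)ᵀ) = (2:ℝ) • symPart (Pf t * Qf t) := by
      rw [symPart, smul_smul, show (2:ℝ) * (1/2) = 1 by norm_num, one_smul]
    have heig' : (symPart (Pf t * Qf t)).mulVec (x i t) = lam i t • x i t := heig i t
    rw [h2, Matrix.smul_mulVec, heig']
    simp only [smul_dotProduct, smul_eq_mul]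
    rw [hxx i]
    ring
  -- middle term
  have hmid : ∀ i, x i t ⬝ᵥ M'.mulVec (x i t)
      = ε * ((D₁.mulVec ((A₂ + ε • E₂ t)ᵀ.mulVec (D₂.mulVec (x i t))))
              ⬝ᵥ (E₁' t).mulVec (x i t)
           + (D₂.mulVec (x i t))
              ⬝ᵥ (E₂' t).mulVec (D₁.mulVec ((A₁ + ε • E₁ t).mulVec (x i t)))) := by
    intro i
    have hterm2 : x i t ⬝ᵥ ((D₂ * (ε • E₂' t)) * (D₁ * (A₁ + ε • E₁ t))).mulVec (x i t)
        = ε * ((D₂.mulVec (x i t))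
            ⬝ᵥ (E₂' t).mulVec (D₁.mulVec ((A₁ + ε • E₁ t).mulVec (x i t)))) := by
      simp only [← Matrix.mulVec_mulVec]
      rw [dot_mulVec_left D₂, hD₂s, Matrix.smul_mulVec, dotProduct_smul,
        smul_eq_mul]
    have hterm1 : x i t ⬝ᵥ ((D₂ * (A₂ + ε • E₂ t)) * (D₁ * (ε • E₁' t))).mulVec (x i t)
        = ε * ((D₁.mulVec ((A₂ + ε • E₂ t)ᵀ.mulVec (D₂.mulVec (x i t))))
            ⬝ᵥ (E₁' t).mulVec (x i t)) := by
      simp only [← Matrix.mulVec_mulVec]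
      rw [dot_mulVec_left D₂, hD₂s, dot_mulVec_left (A₂ + ε • E₂ t),
        dot_mulVec_left D₁, hD₁s, Matrix.smul_mulVec, dotProduct_smul,
        smul_eq_mul]
    show x i t ⬝ᵥ ((D₂ * (ε • E₂' t)) * (D₁ * (A₁ + ε • E₁ t))
        + (D₂ * (A₂ + ε • E₂ t)) * (D₁ * (ε • E₁' t))).mulVec (x i t) = _
    rw [Matrix.add_mulVec, dotProduct_add, hterm1, hterm2]
    ring
  -- value of lam'
  have hlamval : ∀ i, lam' i t
      = ε * ((D₁.mulVec ((A₂ + ε • E₂ t)ᵀ.mulVec (D₂.mulVec (x i t))))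
              ⬝ᵥ (E₁' t).mulVec (x i t)
           + (D₂.mulVec (x i t))
              ⬝ᵥ (E₂' t).mulVec (D₁.mulVec ((A₁ + ε • E₁ t).mulVec (x i t)))) := by
    intro i
    have heqfun : (fun s => x i s ⬝ᵥ (Pf s * Qf s).mulVec (x i s)) = lam i := by
      funext s
      exact (hlamEq i s).symm
    have h := hφ i
    rw [heqfun] at h
    have := (hlam i t).unique h
    rw [this, hDval i, hcross i, zero_add, hmid i]
  -- main derivative
  have hF : HasDerivAt (fun s => (1/2:ℝ) * ∑ i, max (lam i s - δ) 0 ^ 2)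
      ((1/2:ℝ) * ∑ i, 2 * max (lam i t - δ) 0 * lam' i t) t := by
    apply HasDerivAt.const_mul
    apply HasDerivAt.fun_sum
    intro i _
    have h := (hasDerivAt_posPart_sq (lam i t - δ)).comp t ((hlam i t).sub_const δ)
    simpa [mul_assoc, Function.comp_def] using h
  -- rewrite the target derivative value
  rw [frobInner_sum_smul, frobInner_sum_smul]
  have hval : ε * ((∑ i, max (lam i t - δ) 0 *
        ((D₁.mulVec ((A₂ + ε • E₂ t)ᵀ.mulVec (D₂.mulVec (x i t))))
          ⬝ᵥ (E₁' t).mulVec (x i t)))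
      + (∑ i, max (lam i t - δ) 0 *
        ((D₂.mulVec (x i t))
          ⬝ᵥ (E₂' t).mulVec (D₁.mulVec ((A₁ + ε • E₁ t).mulVec (x i t))))))
      = (1/2:ℝ) * ∑ i, 2 * max (lam i t - δ) 0 * lam' i t := by
    rw [← Finset.sum_add_distrib, Finset.mul_sum, Finset.mul_sum]
    apply Finset.sum_congr rfl
    intro i _
    rw [hlamval i]
    ring
  rw [hval]
  exact hF
end
end
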